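/- arXiv:1907.11874 — 2 statements merged into one kernel-verified Lean document; each statement's English description precedes it below -/
import Mathlib

section
/- Let G be a graph on n vertices without isolated vertices. Then the second largest adjacency eigenvalue λ_2(G) equals −1 if and only if G is a complete graph with at least two vertices. -/
open SimpleGraph Finset

/-- Adjacency matrix over `ℝ` (classical decidability). -/
noncomputable def adjMatR {n : ℕ} (G : SimpleGraph (Fin n)) : Matrix (Fin n) (Fin n) ℝ :=
  @SimpleGraph.adjMatrix ℝ (Fin n) G (Classical.decRel _) _ _

lemma adjMatR_isHermitian {n : ℕ} (G : SimpleGraph (Fin n)) : (adjMatR G).IsHermitian := by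
  have h : (adjMatR G).IsSymm := @SimpleGraph.isSymm_adjMatrix ℝ (Fin n) G (Classical.decRel _) _ _
  simpa [Matrix.IsHermitian, Matrix.conjTranspose_eq_transpose_of_trivial, Matrix.IsSymm] using h

/-- Multiset of adjacency eigenvalues (with multiplicity). -/
noncomputable def specMS {n : ℕ} (G : SimpleGraph (Fin n)) : Multiset ℝ :=
  Finset.univ.val.map (adjMatR_isHermitian G).eigenvalues

/-- `i`-th largest adjacency eigenvalue (0-indexed). -/
noncomputable def eigval {n : ℕ} (G : SimpleGraph (Fin n)) (i : ℕ) : ℝ :=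
  ((specMS G).sort (· ≥ ·)).getD i 0

/-- Graph energy. -/
noncomputable def energy {n : ℕ} (G : SimpleGraph (Fin n)) : ℝ :=
  ((specMS G).map (fun x => |x|)).sum

/-- ℓ¹ spectral distance. -/
noncomputable def specDist {n : ℕ} (G H : SimpleGraph (Fin n)) : ℝ :=
  ∑ i ∈ Finset.range n, |eigval G i - eigval H i|

/-- number of edges -/
noncomputable def numEdges {n : ℕ} (G : SimpleGraph (Fin n)) : ℕ := G.edgeSet.ncard

/-- `K_2 + (n-2)K_1`: one edge plus isolated vertices. -/
def oneEdgeG (n : ℕ) : SimpleGraph (Fin n) :=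
  SimpleGraph.fromRel (fun u v => (u : ℕ) = 0 ∧ (v : ℕ) = 1)

/-- `P_3 + (n-3)K_1`: a path on 3 vertices plus isolated vertices. -/
def path3G (n : ℕ) : SimpleGraph (Fin n) :=
  SimpleGraph.fromRel (fun u v => ((u : ℕ) = 0 ∧ (v : ℕ) = 1) ∨ ((u : ℕ) = 1 ∧ (v : ℕ) = 2))

/-- Complete bipartite graph `K_{a,b}` on `Fin (a+b)`. -/
def compBip (a b : ℕ) : SimpleGraph (Fin (a + b)) :=
  SimpleGraph.fromRel (fun u v => (u : ℕ) < a ∧ a ≤ (v : ℕ))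

/-- `K_{r,s} + tK_1`: complete bipartite plus `t` isolated vertices. -/
def compBipPlus (r s t : ℕ) : SimpleGraph (Fin (r + s + t)) :=
  SimpleGraph.fromRel (fun u v => (u : ℕ) < r ∧ r ≤ (v : ℕ) ∧ (v : ℕ) < r + s)

/-- `K_1 + K_{n-1}`: an isolated vertex plus a complete graph. -/
def k1PlusComplete (n : ℕ) : SimpleGraph (Fin n) :=
  SimpleGraph.fromRel (fun u v => (u : ℕ) ≠ 0 ∧ (v : ℕ) ≠ 0)

/-- `(K_1 + K_2) ∇ (n-3)K_1`: join of `K_1 + K_2` with `n-3` isolated vertices. -/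
def k1k2JoinEmpty (n : ℕ) : SimpleGraph (Fin n) :=
  SimpleGraph.fromRel (fun u v =>
    ((u : ℕ) = 1 ∧ (v : ℕ) = 2) ∨ ((u : ℕ) < 3 ∧ 3 ≤ (v : ℕ)))

/-! ### Auxiliary lemmas -/

section Aux

open Matrix

lemma aux_trace_eq_sum_eigen {m : Type*} [Fintype m] [DecidableEq m] {A : Matrix m m ℝ}
    (hA : A.IsHermitian) : ∑ i, hA.eigenvalues i = A.trace := by
  conv_rhs => rw [hA.spectral_theorem, Unitary.conjStarAlgAut_apply]
  rw [Matrix.trace_mul_cycle, Unitary.coe_star_mul_self, one_mul]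
  simp [Matrix.trace_diagonal]

lemma aux_trace_sq_eq_sum_eigen_sq {m : Type*} [Fintype m] [DecidableEq m] {A : Matrix m m ℝ}
    (hA : A.IsHermitian) : ∑ i, hA.eigenvalues i ^ 2 = (A * A).trace := by
  conv_rhs => rw [hA.spectral_theorem, Unitary.conjStarAlgAut_apply]
  rw [show ((hA.eigenvectorUnitary : Matrix m m ℝ) * _ * _) * ((hA.eigenvectorUnitary : Matrix m m ℝ) * _ * _)
    = (hA.eigenvectorUnitary : Matrix m m ℝ) * (diagonal (RCLike.ofReal ∘ hA.eigenvalues) * ((star (hA.eigenvectorUnitary : Matrix m m ℝ)) * (hA.eigenvectorUnitary : Matrix m m ℝ)) * diagonal (RCLike.ofReal ∘ hA.eigenvalues)) * (star (hA.eigenvectorUnitary : Matrix m m ℝ)) by simp only [Matrix.mul_assoc]]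
  rw [Unitary.coe_star_mul_self, mul_one, Matrix.trace_mul_cycle, Unitary.coe_star_mul_self, one_mul,
    diagonal_mul_diagonal]
  simp [Matrix.trace_diagonal, pow_two]

lemma adjMatR_apply {n : ℕ} (G : SimpleGraph (Fin n)) (u v : Fin n) :
    adjMatR G u v = @ite _ (G.Adj u v) (Classical.decRel _ u v) (1:ℝ) 0 := rfl

lemma adjMatR_trace {n : ℕ} (G : SimpleGraph (Fin n)) : (adjMatR G).trace = 0 := by
  have : ∀ u : Fin n, adjMatR G u u = 0 := by
    intro u
    rw [adjMatR_apply, if_neg (G.irrefl)]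
  simp [Matrix.trace, Matrix.diag, this]

lemma adjMatR_sq_top {n : ℕ} :
    adjMatR (⊤ : SimpleGraph (Fin n)) * adjMatR (⊤ : SimpleGraph (Fin n))
      = ((n:ℝ) - 2) • adjMatR (⊤ : SimpleGraph (Fin n)) + ((n:ℝ) - 1) • (1 : Matrix (Fin n) (Fin n) ℝ) := by
  ext i j
  classical
  have hap : ∀ u v : Fin n, adjMatR (⊤ : SimpleGraph (Fin n)) u v = if u = v then 0 else 1 := by
    intro u v
    rw [adjMatR_apply]
    by_cases h : u = v <;> simp [h]
  have key : ∀ k : Fin n, adjMatR (⊤ : SimpleGraph (Fin n)) i k * adjMatR (⊤ : SimpleGraph (Fin n)) k j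
      = 1 - (if i = k then (1:ℝ) else 0) - (if k = j then (1:ℝ) else 0)
        + (if i = k then (1:ℝ) else 0) * (if k = j then (1:ℝ) else 0) := by
    intro k
    rw [hap, hap]
    by_cases h1 : i = k <;> by_cases h2 : k = j <;> simp [h1, h2]
  rw [Matrix.mul_apply]
  simp only [key]
  rw [Finset.sum_add_distrib, Finset.sum_sub_distrib, Finset.sum_sub_distrib]
  simp only [Finset.sum_ite_eq, Finset.sum_ite_eq', Finset.mem_univ, if_true, Finset.sum_const,
    Finset.card_univ, Fintype.card_fin, nsmul_eq_mul, mul_one]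
  have : ∑ k : Fin n, (if i = k then (1:ℝ) else 0) * (if k = j then (1:ℝ) else 0)
      = if i = j then 1 else 0 := by
    rw [Finset.sum_eq_single i]
    · simp
    · intro b _ hb; simp [Ne.symm hb]
    · simp
  rw [this]
  simp only [Matrix.add_apply, Matrix.smul_apply, Matrix.one_apply, hap, smul_eq_mul]
  by_cases h : i = j <;> simp [h] <;> ring

lemma eig_top {n : ℕ} (i : Fin n) :
    (adjMatR_isHermitian (⊤ : SimpleGraph (Fin n))).eigenvalues i = -1 ∨
    (adjMatR_isHermitian (⊤ : SimpleGraph (Fin n))).eigenvalues i = (n:ℝ) - 1 := by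
  set hA := adjMatR_isHermitian (⊤ : SimpleGraph (Fin n))
  set A := adjMatR (⊤ : SimpleGraph (Fin n))
  set μ := hA.eigenvalues i with hμ
  set v : Fin n → ℝ := ⇑(hA.eigenvectorBasis i) with hv
  have hv0 : v ≠ 0 := by
    have := hA.eigenvectorBasis.orthonormal.ne_zero i
    intro hc
    apply this
    ext j
    exact congrFun hc j
  have h1 : A *ᵥ v = μ • v := hA.mulVec_eigenvectorBasis i
  have h2 : (A * A) *ᵥ v = (μ * μ) • v := by
    rw [← Matrix.mulVec_mulVec, h1, Matrix.mulVec_smul, h1, smul_smul]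
  rw [adjMatR_sq_top] at h2
  have h3 : (((n:ℝ) - 2) • A + ((n:ℝ) - 1) • (1 : Matrix (Fin n) (Fin n) ℝ)) *ᵥ v
      = (((n:ℝ) - 2) * μ + ((n:ℝ) - 1)) • v := by
    rw [Matrix.add_mulVec, Matrix.smul_mulVec, Matrix.smul_mulVec, h1,
      Matrix.one_mulVec, smul_smul, add_smul]
  have h4 : (μ * μ - (((n:ℝ) - 2) * μ + ((n:ℝ) - 1))) • v = 0 := by
    rw [sub_smul, h2.symm.trans h3, sub_self]
  rcases smul_eq_zero.mp h4 with hc | hc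
  · have : (μ + 1) * (μ - ((n:ℝ) - 1)) = 0 := by nlinarith [hc]
    rcases mul_eq_zero.mp this with h | h
    · left; linarith
    · right; linarith
  · exact absurd hc hv0

lemma aux_list1 (n : ℕ) (hn : 2 ≤ n) (l : List ℝ) (hlen : l.length = n)
    (hsort : l.Pairwise (· ≥ ·)) (hsum : l.sum = 0) (hb : l.getD 1 0 = -1) :
    (n:ℝ) * ((n:ℝ) - 1) ≤ (l.map (fun x => x ^ 2)).sum := by
  match l with
  | [] => simp at hlen; omega
  | [a] => simp at hlen; omega
  | a :: b :: t =>
    have hbb : b = -1 := by simpa [List.getD] using hb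
    subst hbb
    simp only [List.pairwise_cons] at hsort
    obtain ⟨hab, hbt, _⟩ := hsort
    have hab' : a ≥ -1 := hab _ (by simp)
    have ht : ∀ x ∈ t, x ≤ -1 := fun x hx => hbt x hx
    have htl : (t.length : ℝ) = (n:ℝ) - 2 := by
      simp only [List.length_cons] at hlen
      have : t.length = n - 2 := by omega
      rw [this]
      push_cast [Nat.cast_sub hn]
      ring
    have hts : t.sum ≤ (t.length : ℝ) * (-1) := by
      have := List.sum_le_card_nsmul t (-1) ht
      simpa [nsmul_eq_mul] using this
    have hsum' : a + (-1 + t.sum) = 0 := by simpa using hsum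
    have ha : a ≥ (n:ℝ) - 1 := by
      have : t.sum ≤ -((n:ℝ) - 2) := by rw [htl] at hts; linarith
      linarith
    have hsq : ∀ y ∈ t.map (fun x => x ^ 2), (1:ℝ) ≤ y := by
      intro y hy
      obtain ⟨x, hx, rfl⟩ := List.mem_map.mp hy
      have := ht x hx
      nlinarith
    have htsq : (t.length : ℝ) * 1 ≤ (t.map (fun x => x ^ 2)).sum := by
      have := List.card_nsmul_le_sum (t.map (fun x => x ^ 2)) 1 hsq
      simpa [nsmul_eq_mul] using this
    have hasq : ((n:ℝ) - 1) ^ 2 ≤ a ^ 2 := by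
      have h1 : (1:ℝ) ≤ (n:ℝ) - 1 := by
        have : (2:ℝ) ≤ (n:ℝ) := by exact_mod_cast hn
        linarith
      nlinarith
    simp only [List.map_cons, List.sum_cons]
    have hn' : (2:ℝ) ≤ (n:ℝ) := by exact_mod_cast hn
    rw [htl] at htsq
    nlinarith

lemma aux_list2 (n : ℕ) (hn : 2 ≤ n) (l : List ℝ) (hlen : l.length = n)
    (hsort : l.Pairwise (· ≥ ·)) (hsum : l.sum = 0)
    (hmem : ∀ x ∈ l, x = -1 ∨ x = (n:ℝ) - 1) :
    l.getD 1 0 = -1 := by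
  match l with
  | [] => simp at hlen; omega
  | [a] => simp at hlen; omega
  | a :: b :: t =>
    have hn' : (2:ℝ) ≤ (n:ℝ) := by exact_mod_cast hn
    simp only [List.getD]
    show b = -1
    by_contra hb
    have hbv : b = (n:ℝ) - 1 := by
      rcases hmem b (by simp) with h | h
      · exact absurd h hb
      · exact h
    simp only [List.pairwise_cons] at hsort
    obtain ⟨hab, _, _⟩ := hsort
    have hav : a = (n:ℝ) - 1 := by
      rcases hmem a (by simp) with h | h
      · exfalso
        have := hab b (by simp)
        rw [h, hbv] at this
        linarith
      · exact h
    have ht : ∀ x ∈ t, (-1:ℝ) ≤ x := by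
      intro x hx
      rcases hmem x (by simp [hx]) with h | h <;> rw [h] <;> linarith
    have hts : (t.length : ℝ) * (-1) ≤ t.sum := by
      have := List.card_nsmul_le_sum t (-1) ht
      simpa [nsmul_eq_mul] using this
    have htl : (t.length : ℝ) = (n:ℝ) - 2 := by
      simp only [List.length_cons] at hlen
      have : t.length = n - 2 := by omega
      rw [this]
      push_cast [Nat.cast_sub hn]
      ring
    have hsum' : a + (b + t.sum) = 0 := by simpa using hsum
    rw [htl] at hts
    rw [hav, hbv] at hsum'
    linarith

lemma specMS_sorted {n : ℕ} (G : SimpleGraph (Fin n)) :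
    ((specMS G).sort (· ≥ ·)).Pairwise (· ≥ ·) := Multiset.pairwise_sort _ _

lemma specMS_coe_sort {n : ℕ} (G : SimpleGraph (Fin n)) :
    (((specMS G).sort (· ≥ ·) : List ℝ) : Multiset ℝ) = specMS G := Multiset.sort_eq _ _

lemma specMS_sort_length {n : ℕ} (G : SimpleGraph (Fin n)) :
    ((specMS G).sort (· ≥ ·)).length = n := by
  rw [Multiset.length_sort]
  simp [specMS]

lemma specMS_sort_sum {n : ℕ} (G : SimpleGraph (Fin n)) :
    ((specMS G).sort (· ≥ ·)).sum = 0 := by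
  have h1 : ((specMS G).sort (· ≥ ·)).sum = (specMS G).sum := by
    rw [← Multiset.sum_coe, specMS_coe_sort]
  rw [h1]
  have h2 : (specMS G).sum = ∑ i, (adjMatR_isHermitian G).eigenvalues i := rfl
  rw [h2, aux_trace_eq_sum_eigen, adjMatR_trace]

lemma specMS_sort_sq_sum {n : ℕ} (G : SimpleGraph (Fin n)) :
    (((specMS G).sort (· ≥ ·)).map (fun x => x ^ 2)).sum = (adjMatR G * adjMatR G).trace := by
  have h1 : ((((specMS G).sort (· ≥ ·)).map (fun x => x ^ 2) : List ℝ) : Multiset ℝ)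
      = (specMS G).map (fun x => x ^ 2) := by
    rw [← Multiset.map_coe, specMS_coe_sort]
  have h2 : (((specMS G).sort (· ≥ ·)).map (fun x => x ^ 2)).sum
      = ((specMS G).map (fun x => x ^ 2)).sum := by
    rw [← Multiset.sum_coe, h1]
  rw [h2]
  have h3 : ((specMS G).map (fun x => x ^ 2)).sum
      = ∑ i, (adjMatR_isHermitian G).eigenvalues i ^ 2 := by
    rw [specMS, Multiset.map_map]
    rfl
  rw [h3, aux_trace_sq_eq_sum_eigen_sq]

end Aux

theorem secondEig_eq_neg_one_iff (n : ℕ) (hn : 2 ≤ n) (G : SimpleGraph (Fin n))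
    (h : ∀ v, ∃ w, G.Adj v w) :
    eigval G 1 = -1 ↔ G = (⊤ : SimpleGraph (Fin n)) := by
  classical
  constructor
  · intro hev
    -- sum of squares of eigenvalues is at least n(n-1)
    have hkey : (n:ℝ) * ((n:ℝ) - 1) ≤ (adjMatR G * adjMatR G).trace := by
      rw [← specMS_sort_sq_sum]
      exact aux_list1 n hn _ (specMS_sort_length G) (specMS_sorted G) (specMS_sort_sum G) hev
    by_contra hne
    obtain ⟨u, v, huv, hnadj⟩ : ∃ u v : Fin n, u ≠ v ∧ ¬ G.Adj u v := by
      by_contra hc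
      push_neg at hc
      apply hne
      ext a b
      simp only [SimpleGraph.top_adj]
      exact ⟨fun hab => hab.ne, fun hab => hc a b hab⟩
    set A := adjMatR G with hA
    have h01 : ∀ a b : Fin n, 0 ≤ A a b ∧ A a b ≤ 1 := by
      intro a b
      rw [hA, adjMatR_apply]
      by_cases hab : G.Adj a b <;> simp [hab]
    have hdiag : ∀ a : Fin n, A a a = 0 := by
      intro a
      rw [hA, adjMatR_apply, if_neg (G.irrefl)]
    have htr : (A * A).trace = ∑ p ∈ (univ ×ˢ univ : Finset (Fin n × Fin n)), A p.1 p.2 * A p.2 p.1 := by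
      rw [Finset.sum_product]
      simp [Matrix.trace, Matrix.diag, Matrix.mul_apply]
    have hG : ∑ p ∈ (univ ×ˢ univ : Finset (Fin n × Fin n)),
        (if p.1 = p.2 then (0:ℝ) else 1) = (n:ℝ) * ((n:ℝ) - 1) := by
      rw [Finset.sum_product]
      have : ∀ a : Fin n, ∑ b : Fin n, (if a = b then (0:ℝ) else 1) = (n:ℝ) - 1 := by
        intro a
        have : ∑ b : Fin n, (if a = b then (0:ℝ) else 1)
            = ∑ b : Fin n, ((1:ℝ) - if a = b then 1 else 0) := by
          apply Finset.sum_congr rfl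
          intro b _
          by_cases hab : a = b <;> simp [hab]
        rw [this, Finset.sum_sub_distrib]
        simp
      simp only [this, Finset.sum_const, Finset.card_univ, Fintype.card_fin, nsmul_eq_mul]
    have hlt : ∑ p ∈ (univ ×ˢ univ : Finset (Fin n × Fin n)), A p.1 p.2 * A p.2 p.1
        < ∑ p ∈ (univ ×ˢ univ : Finset (Fin n × Fin n)), (if p.1 = p.2 then (0:ℝ) else 1) := by
      apply Finset.sum_lt_sum
      · intro p _
        by_cases hp : p.1 = p.2
        · simp [hp, hdiag]
        · simp only [hp, if_false]
          have h1 := h01 p.1 p.2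
          have h2 := h01 p.2 p.1
          nlinarith
      · refine ⟨(u, v), by simp, ?_⟩
        have hz : A u v = 0 := by
          rw [hA, adjMatR_apply, if_neg hnadj]
        simp [hz, huv]
    rw [htr] at hkey
    rw [hG] at hlt
    linarith
  · rintro rfl
    rw [eigval]
    apply aux_list2 n hn _ (specMS_sort_length _) (specMS_sorted _) (specMS_sort_sum _)
    intro x hx
    have : x ∈ specMS (⊤ : SimpleGraph (Fin n)) := by
      rw [← specMS_coe_sort (⊤ : SimpleGraph (Fin n))]
      exact_mod_cast hx
    obtain ⟨i, _, rfl⟩ := Multiset.mem_map.mp this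
    exact eig_top i
end

section
/- Let G be a graph on n vertices without isolated vertices. Then λ_2(G) = 0 if and only if G is a complete k-partite graph for some 2 ≤ k ≤ n−1. -/
open SimpleGraph Finset

open Matrix

section Aux

open Matrix

variable {n : ℕ}

/-- quadratic form of the adjacency matrix -/
noncomputable def Qf (G : SimpleGraph (Fin n)) (x : Fin n → ℝ) : ℝ :=
  dotProduct x (adjMatR G *ᵥ x)

lemma adjMatR_of_adj {G : SimpleGraph (Fin n)} {i j : Fin n} (h : G.Adj i j) :
    adjMatR G i j = 1 := by
  unfold adjMatR
  rw [SimpleGraph.adjMatrix_apply]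
  exact if_pos h

lemma adjMatR_of_not_adj {G : SimpleGraph (Fin n)} {i j : Fin n} (h : ¬ G.Adj i j) :
    adjMatR G i j = 0 := by
  unfold adjMatR
  rw [SimpleGraph.adjMatrix_apply]
  exact if_neg h

lemma Qf_eq (G : SimpleGraph (Fin n)) (x : Fin n → ℝ) :
    Qf G x = ∑ i, ∑ j, adjMatR G i j * x i * x j := by
  unfold Qf dotProduct Matrix.mulVec dotProduct
  refine Finset.sum_congr rfl fun i _ => ?_
  rw [Finset.mul_sum]
  refine Finset.sum_congr rfl fun j _ => ?_
  ring

lemma Qf_support (G : SimpleGraph (Fin n)) (s : Finset (Fin n)) (x : Fin n → ℝ)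
    (hx : ∀ i ∉ s, x i = 0) :
    Qf G x = ∑ i ∈ s, ∑ j ∈ s, adjMatR G i j * x i * x j := by
  rw [Qf_eq]
  rw [← Finset.sum_subset (Finset.subset_univ s) (by
    intro i _ hi
    simp [hx i hi])]
  refine Finset.sum_congr rfl fun i _ => ?_
  rw [← Finset.sum_subset (Finset.subset_univ s) (by
    intro j _ hj
    simp [hx j hj])]

lemma inner_eq_dot (a b : EuclideanSpace ℝ (Fin n)) :
    (inner ℝ a b : ℝ) = dotProduct ((WithLp.equiv 2 _) a) ((WithLp.equiv 2 _) b) := by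
  simp [PiLp.inner_apply, RCLike.inner_apply, dotProduct, mul_comm]

lemma spec_form (A : Matrix (Fin n) (Fin n) ℝ) (hA : A.IsHermitian)
    (x : EuclideanSpace ℝ (Fin n)) :
    dotProduct ((WithLp.equiv 2 _) x) (A *ᵥ (WithLp.equiv 2 _) x) =
      ∑ i, hA.eigenvalues i * (inner ℝ (hA.eigenvectorBasis i) x : ℝ)^2 := by
  set v := hA.eigenvectorBasis with hv
  set c : Fin n → ℝ := fun i => v.repr x i with hc
  have hx : (∑ i, c i • v i) = x := v.sum_repr x
  have hAx : A *ᵥ (WithLp.equiv 2 _) x =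
      (WithLp.equiv 2 _) (∑ i, (c i * hA.eigenvalues i) • v i) := by
    nth_rewrite 1 [← hx]
    have h1 : ((WithLp.equiv 2 _) (∑ i, c i • v i) : Fin n → ℝ)
        = ∑ i, c i • ((WithLp.equiv 2 _) (v i) : Fin n → ℝ) := by
      change WithLp.ofLp (∑ i, c i • v i) = ∑ i, c i • WithLp.ofLp (v i)
      rw [WithLp.ofLp_sum]; rfl
    have h2 : ((WithLp.equiv 2 _) (∑ i, (c i * hA.eigenvalues i) • v i) : Fin n → ℝ)
        = ∑ i, (c i * hA.eigenvalues i) • ((WithLp.equiv 2 _) (v i) : Fin n → ℝ) := by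
      change WithLp.ofLp (∑ i, (c i * hA.eigenvalues i) • v i)
        = ∑ i, (c i * hA.eigenvalues i) • WithLp.ofLp (v i)
      rw [WithLp.ofLp_sum]; rfl
    rw [h1, h2]
    simp only [← Matrix.mulVecLin_apply, map_sum, _root_.map_smul]
    refine Finset.sum_congr rfl fun i _ => ?_
    simp only [Matrix.mulVecLin_apply, Matrix.mulVec_smul]
    rw [show (WithLp.equiv 2 (Fin n → ℝ)) (v i) = (v i).ofLp from rfl,
      hA.mulVec_eigenvectorBasis i]
    rw [smul_smul, mul_comm]
  rw [hAx, ← inner_eq_dot]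
  nth_rewrite 1 [← hx]
  rw [v.orthonormal.inner_sum]
  refine Finset.sum_congr rfl fun i _ => ?_
  have hci : c i = inner ℝ (v i) x := v.repr_apply_apply x i
  simp only [starRingEnd_apply, star_trivial, ← hci]
  ring

lemma Qf_spec (G : SimpleGraph (Fin n)) (x : EuclideanSpace ℝ (Fin n)) :
    Qf G ((WithLp.equiv 2 _) x) = ∑ i, (adjMatR_isHermitian G).eigenvalues i *
      (inner ℝ ((adjMatR_isHermitian G).eigenvectorBasis i) x : ℝ)^2 :=
  spec_form (adjMatR G) (adjMatR_isHermitian G) x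

/-- generic contradiction: 2-dim positive set vs nonpositive kernel of a functional -/
lemma keyContra (Q : (Fin n → ℝ) → ℝ) (φ : (Fin n → ℝ) → ℝ) (X Y : Fin n → ℝ)
    (hφ : ∀ (a b : ℝ), φ (a • X + b • Y) = a * φ X + b * φ Y)
    (hker : ∀ z, φ z = 0 → Q z ≤ 0)
    (hpos : ∀ a b : ℝ, ¬(a = 0 ∧ b = 0) → 0 < Q (a • X + b • Y)) : False := by
  by_cases hx : φ X = 0
  · have h1 : φ ((1:ℝ) • X + (0:ℝ) • Y) = 0 := by rw [hφ]; rw [hx]; ring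
    have := hker _ h1
    have := hpos 1 0 (by norm_num)
    linarith
  · have h1 : φ ((-(φ Y)) • X + (φ X) • Y) = 0 := by rw [hφ]; ring
    have := hker _ h1
    have := hpos (-(φ Y)) (φ X) (by tauto)
    linarith

lemma sort_second_iff (p : ℝ → Prop) [DecidablePred p] (hup : ∀ a b, a ≤ b → p a → p b)
    (s : Multiset ℝ) (hcard : 2 ≤ Multiset.card s) :
    2 ≤ Multiset.countP p s ↔ p ((s.sort (· ≥ ·)).getD 1 0) := by
  have hlen : (s.sort (· ≥ ·)).length = Multiset.card s := Multiset.length_sort _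
  have h2len : 2 ≤ (s.sort (· ≥ ·)).length := by omega
  have hsorted : (s.sort (· ≥ ·)).Pairwise (· ≥ ·) := Multiset.pairwise_sort s _
  have hcnt : Multiset.countP p s = Multiset.countP p ((s.sort (· ≥ ·)) : Multiset ℝ) := by
    rw [Multiset.sort_eq]
  obtain ⟨a, b, t, hlabt⟩ : ∃ a b t, s.sort (· ≥ ·) = a :: b :: t := by
    match hll : s.sort (· ≥ ·), h2len with
    | a :: b :: t, _ => exact ⟨a, b, t, rfl⟩
  rw [hlabt] at hsorted hcnt ⊢
  have hab : a ≥ b := (List.pairwise_cons.mp hsorted).1 b (by simp)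
  have hbt : ∀ x ∈ t, b ≥ x := ((List.pairwise_cons.mp (List.pairwise_cons.mp hsorted).2).1)
  have hgetD : (a :: b :: t).getD 1 0 = b := rfl
  rw [hgetD, hcnt]
  have hcoe : ((a :: b :: t : List ℝ) : Multiset ℝ) = a ::ₘ b ::ₘ (t : Multiset ℝ) := rfl
  rw [hcoe]
  constructor
  · intro h2
    by_contra hpb
    have ht0 : Multiset.countP p (t : Multiset ℝ) = 0 := by
      rw [Multiset.countP_eq_zero]
      intro x hx hpx
      exact hpb (hup x b (hbt x (by exact_mod_cast hx)) hpx)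
    rw [Multiset.countP_cons, Multiset.countP_cons, ht0] at h2
    split_ifs at h2 <;> omega
  · intro hpb
    have hpa : p a := hup b a hab hpb
    rw [Multiset.countP_cons, Multiset.countP_cons, if_pos hpa, if_pos hpb]
    omega

lemma card_specMS (G : SimpleGraph (Fin n)) : Multiset.card (specMS G) = n := by
  simp [specMS]

lemma countP_specMS (G : SimpleGraph (Fin n)) (p : ℝ → Prop) [DecidablePred p] :
    Multiset.countP p (specMS G) =
      (Finset.univ.filter (fun i => p ((adjMatR_isHermitian G).eigenvalues i))).card := by
  unfold specMS
  rw [Multiset.countP_map]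
  rfl

lemma eigval1_iff (G : SimpleGraph (Fin n)) (hn : 2 ≤ n) (p : ℝ → Prop) [DecidablePred p]
    (hup : ∀ a b, a ≤ b → p a → p b) :
    p (eigval G 1) ↔ ∃ i j : Fin n, i ≠ j ∧ p ((adjMatR_isHermitian G).eigenvalues i) ∧
      p ((adjMatR_isHermitian G).eigenvalues j) := by
  rw [eigval, ← sort_second_iff p hup _ (by rw [card_specMS]; omega)]
  rw [countP_specMS]
  rw [show (2:ℕ) ≤ _ ↔ 1 < (Finset.univ.filter
      (fun i => p ((adjMatR_isHermitian G).eigenvalues i))).card from Iff.rfl]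
  rw [Finset.one_lt_card]
  constructor
  · rintro ⟨i, hi, j, hj, hij⟩
    simp only [Finset.mem_filter] at hi hj
    exact ⟨i, j, hij, hi.2, hj.2⟩
  · rintro ⟨i, j, hij, hi, hj⟩
    exact ⟨i, by simp [hi], j, by simp [hj], hij⟩

end Aux

section Aux2
open Matrix
variable {n : ℕ}

/-- at most one positive eigenvalue gives a nonpositivity functional -/
lemma exists_phi (G : SimpleGraph (Fin n))
    (hone : ¬ ∃ i j : Fin n, i ≠ j ∧ 0 < (adjMatR_isHermitian G).eigenvalues i ∧
      0 < (adjMatR_isHermitian G).eigenvalues j) :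
    ∃ φ : (Fin n → ℝ) → ℝ,
      (∀ (a b : ℝ) (u w : Fin n → ℝ), φ (a • u + b • w) = a * φ u + b * φ w) ∧
      (∀ z, φ z = 0 → Qf G z ≤ 0) := by
  set hA := adjMatR_isHermitian G
  set v := hA.eigenvectorBasis with hv
  by_cases hp : ∃ i0, 0 < hA.eigenvalues i0
  · obtain ⟨i0, hi0⟩ := hp
    refine ⟨fun z => (inner ℝ (v i0) ((WithLp.equiv 2 (Fin n → ℝ)).symm z) : ℝ), ?_, ?_⟩
    · intro a b u w
      dsimp only
      have : ((WithLp.equiv 2 (Fin n → ℝ)).symm (a • u + b • w))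
          = a • (WithLp.equiv 2 (Fin n → ℝ)).symm u + b • (WithLp.equiv 2 (Fin n → ℝ)).symm w := rfl
      rw [this, inner_add_right, real_inner_smul_right, real_inner_smul_right]
    · intro z hz
      dsimp only at hz
      have hzz : Qf G z = ∑ i, hA.eigenvalues i *
          (inner ℝ (v i) ((WithLp.equiv 2 (Fin n → ℝ)).symm z) : ℝ)^2 := by
        have := Qf_spec G ((WithLp.equiv 2 (Fin n → ℝ)).symm z)
        simpa using this
      rw [hzz]
      apply Finset.sum_nonpos
      intro i _
      by_cases hii : i = i0
      · subst hii; rw [hz]; simp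
      · have hle : hA.eigenvalues i ≤ 0 := by
          by_contra hpos
          push_neg at hpos
          exact hone ⟨i, i0, hii, hpos, hi0⟩
        have := sq_nonneg (inner ℝ (v i) ((WithLp.equiv 2 (Fin n → ℝ)).symm z) : ℝ)
        nlinarith
  · push_neg at hp
    refine ⟨fun _ => 0, by intro a b u w; ring, ?_⟩
    intro z _
    have hzz : Qf G z = ∑ i, hA.eigenvalues i *
        (inner ℝ (v i) ((WithLp.equiv 2 (Fin n → ℝ)).symm z) : ℝ)^2 := by
      have := Qf_spec G ((WithLp.equiv 2 (Fin n → ℝ)).symm z)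
      simpa using this
    rw [hzz]
    apply Finset.sum_nonpos
    intro i _
    have := sq_nonneg (inner ℝ (v i) ((WithLp.equiv 2 (Fin n → ℝ)).symm z) : ℝ)
    nlinarith [hp i]

/-- two positive eigenvalues give a 2-dim positive subspace -/
lemma two_pos_vectors (G : SimpleGraph (Fin n)) {i j : Fin n} (hij : i ≠ j)
    (hi : 0 < (adjMatR_isHermitian G).eigenvalues i)
    (hj : 0 < (adjMatR_isHermitian G).eigenvalues j) :
    ∃ X Y : Fin n → ℝ, ∀ a b : ℝ, ¬(a = 0 ∧ b = 0) → 0 < Qf G (a • X + b • Y) := by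
  set hA := adjMatR_isHermitian G
  set v := hA.eigenvectorBasis with hv
  refine ⟨(WithLp.equiv 2 (Fin n → ℝ)) (v i), (WithLp.equiv 2 (Fin n → ℝ)) (v j), ?_⟩
  intro a b hab
  have hcomb : (a • (WithLp.equiv 2 (Fin n → ℝ)) (v i) + b • (WithLp.equiv 2 (Fin n → ℝ)) (v j))
      = (WithLp.equiv 2 (Fin n → ℝ)) (a • v i + b • v j) := rfl
  rw [hcomb, Qf_spec]
  have hinner : ∀ k, (inner ℝ (v k) (a • v i + b • v j) : ℝ)
      = (if k = i then a else 0) + (if k = j then b else 0) := by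
    intro k
    rw [inner_add_right, real_inner_smul_right, real_inner_smul_right]
    have h1 : (inner ℝ (v k) (v i) : ℝ) = if k = i then 1 else 0 :=
      orthonormal_iff_ite.mp v.orthonormal k i
    have h2 : (inner ℝ (v k) (v j) : ℝ) = if k = j then 1 else 0 :=
      orthonormal_iff_ite.mp v.orthonormal k j
    rw [h1, h2]
    split_ifs <;> ring
  have hsum : ∑ k, hA.eigenvalues k * (inner ℝ (v k) (a • v i + b • v j) : ℝ)^2
      = hA.eigenvalues i * a^2 + hA.eigenvalues j * b^2 := by
    rw [← Finset.sum_subset (Finset.subset_univ ({i, j} : Finset (Fin n)))]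
    · rw [Finset.sum_pair hij]
      rw [hinner i, hinner j]
      rw [if_pos rfl, if_pos rfl, if_neg hij, if_neg (Ne.symm hij)]
      ring
    · intro k _ hk
      simp only [Finset.mem_insert, Finset.mem_singleton] at hk
      push_neg at hk
      rw [hinner k, if_neg hk.1, if_neg hk.2]
      ring
  rw [hsum]
  rcases not_and_or.mp hab with ha | hb
  · have : 0 < a^2 := by positivity
    nlinarith [sq_nonneg b]
  · have : 0 < b^2 := by positivity
    nlinarith [sq_nonneg a]

end Aux2

section Aux3
open Matrix
variable {n : ℕ}

/-- complete multipartite quadratic form is nonpositive on sum-zero vectors -/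
lemma Qf_multipartite (G : SimpleGraph (Fin n)) {k : ℕ} (f : Fin n → Fin k)
    (hGf : ∀ u v, G.Adj u v ↔ f u ≠ f v) (x : Fin n → ℝ) (hsum : ∑ i, x i = 0) :
    Qf G x ≤ 0 := by
  have hentry : ∀ i j, adjMatR G i j * x i * x j
      = x i * x j - (if f i = f j then x i * x j else 0) := by
    intro i j
    by_cases hf : f i = f j
    · have : ¬ G.Adj i j := by rw [hGf]; simpa using hf
      rw [adjMatR_of_not_adj this, if_pos hf]
      ring
    · have : G.Adj i j := by rw [hGf]; exact hf
      rw [adjMatR_of_adj this, if_neg hf]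
      ring
  rw [Qf_eq]
  have h1 : ∑ i, ∑ j, adjMatR G i j * x i * x j
      = (∑ i, x i) * (∑ j, x j) - ∑ i, ∑ j, (if f i = f j then x i * x j else 0) := by
    rw [Finset.sum_mul_sum, ← Finset.sum_sub_distrib]
    refine Finset.sum_congr rfl fun i _ => ?_
    rw [← Finset.sum_sub_distrib]
    exact Finset.sum_congr rfl fun j _ => hentry i j
  rw [h1, hsum, zero_mul, zero_sub, neg_nonpos]
  have h2 : ∑ i, ∑ j, (if f i = f j then x i * x j else 0)
      = ∑ p : Fin k, (∑ i ∈ Finset.univ.filter (fun i => f i = p), x i)^2 := by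
    have h3 : ∀ i, ∑ j, (if f i = f j then x i * x j else 0)
        = x i * ∑ j ∈ Finset.univ.filter (fun j => f j = f i), x j := by
      intro i
      rw [Finset.mul_sum, Finset.sum_filter]
      refine Finset.sum_congr rfl fun j _ => ?_
      by_cases hf : f i = f j
      · rw [if_pos hf, if_pos hf.symm]
      · rw [if_neg hf, if_neg (Ne.symm hf)]
    calc ∑ i, ∑ j, (if f i = f j then x i * x j else 0)
        = ∑ i, x i * ∑ j ∈ Finset.univ.filter (fun j => f j = f i), x j := by
          exact Finset.sum_congr rfl fun i _ => h3 i
      _ = ∑ p : Fin k, ∑ i ∈ Finset.univ.filter (fun i => f i = p),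
            (x i * ∑ j ∈ Finset.univ.filter (fun j => f j = f i), x j) :=
          (Finset.sum_fiberwise _ _ _).symm
      _ = ∑ p : Fin k, (∑ i ∈ Finset.univ.filter (fun i => f i = p), x i)^2 := by
          refine Finset.sum_congr rfl fun p _ => ?_
          rw [sq, Finset.sum_mul]
          refine Finset.sum_congr rfl fun i hi => ?_
          simp only [Finset.mem_filter] at hi
          rw [hi.2]
      _ = _ := rfl
  rw [h2]
  positivity

/-- an edge gives a positive value of the quadratic form -/
lemma Qf_edge (G : SimpleGraph (Fin n)) {u w : Fin n} (huw : G.Adj u w) :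
    Qf G (fun i => (if i = u then 1 else 0) + (if i = w then 1 else 0)) = 2 := by
  have hne : u ≠ w := huw.ne
  set x : Fin n → ℝ := fun i => (if i = u then 1 else 0) + (if i = w then 1 else 0) with hx
  have hsupp : ∀ i ∉ ({u, w} : Finset (Fin n)), x i = 0 := by
    intro i hi
    simp only [Finset.mem_insert, Finset.mem_singleton] at hi
    push_neg at hi
    simp [hx, hi.1, hi.2]
  rw [Qf_support G {u, w} x hsupp]
  rw [Finset.sum_pair hne]
  rw [Finset.sum_pair hne, Finset.sum_pair hne]
  have hxu : x u = 1 := by simp [hx, hne]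
  have hxw : x w = 1 := by simp [hx, Ne.symm hne]
  rw [adjMatR_of_not_adj (G.irrefl (v := u)), adjMatR_of_not_adj (G.irrefl (v := w)),
    adjMatR_of_adj huw, adjMatR_of_adj huw.symm, hxu, hxw]
  ring

end Aux3

section Aux4
open Matrix
variable {n : ℕ}

lemma exists_eig_zero_of_eigval (G : SimpleGraph (Fin n)) (hn : 2 ≤ n) (h : eigval G 1 = 0) :
    ∃ i, (adjMatR_isHermitian G).eigenvalues i = 0 := by
  have hlen : ((specMS G).sort (· ≥ ·)).length = n := by
    rw [Multiset.length_sort, card_specMS]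
  have h1 : (1 : ℕ) < ((specMS G).sort (· ≥ ·)).length := by omega
  have hmem : eigval G 1 ∈ (specMS G).sort (· ≥ ·) := by
    rw [eigval, List.getD_eq_getElem?_getD, List.getElem?_eq_getElem h1, Option.getD_some]
    exact List.getElem_mem h1
  rw [h] at hmem
  have hmem2 : (0:ℝ) ∈ specMS G := by
    rwa [← Multiset.mem_sort (· ≥ ·)]
  unfold specMS at hmem2
  rw [Multiset.mem_map] at hmem2
  obtain ⟨i, _, hi⟩ := hmem2
  exact ⟨i, hi⟩

lemma eig_zero_of_kernel (G : SimpleGraph (Fin n)) {y : Fin n → ℝ} (hy : y ≠ 0)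
    (h : adjMatR G *ᵥ y = 0) : ∃ i, (adjMatR_isHermitian G).eigenvalues i = 0 := by
  have hdet : (adjMatR G).det = 0 := Matrix.exists_mulVec_eq_zero_iff.mp ⟨y, hy, h⟩
  have hprod := (adjMatR_isHermitian G).det_eq_prod_eigenvalues
  rw [hdet] at hprod
  have : ∏ i, (adjMatR_isHermitian G).eigenvalues i = 0 := by exact_mod_cast hprod.symm
  obtain ⟨i, _, hi⟩ := Finset.prod_eq_zero_iff.mp this
  exact ⟨i, hi⟩

lemma eigenvector_of_eig_zero (G : SimpleGraph (Fin n)) {i : Fin n}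
    (h : (adjMatR_isHermitian G).eigenvalues i = 0) :
    ∃ y : Fin n → ℝ, y ≠ 0 ∧ adjMatR G *ᵥ y = 0 := by
  set hA := adjMatR_isHermitian G
  set v := hA.eigenvectorBasis with hv
  refine ⟨(WithLp.equiv 2 (Fin n → ℝ)) (v i), ?_, ?_⟩
  · intro h0
    have hne := v.orthonormal.ne_zero i
    apply hne
    have : v i = (WithLp.equiv 2 (Fin n → ℝ)).symm ((WithLp.equiv 2 (Fin n → ℝ)) (v i)) :=
      (Equiv.symm_apply_apply _ _).symm
    rw [this, h0]
    rfl
  · rw [show (WithLp.equiv 2 (Fin n → ℝ)) (v i) = (v i).ofLp from rfl,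
      hA.mulVec_eigenvectorBasis i, h]
    simp

end Aux4

section Aux5
open Matrix
variable {n : ℕ}

lemma Qf_four (G : SimpleGraph (Fin n)) {u w v t : Fin n}
    (h1 : u ≠ w) (h2 : u ≠ v) (h3 : u ≠ t) (h4 : w ≠ v) (h5 : w ≠ t) (h6 : v ≠ t)
    (huw : G.Adj u w) (huv : ¬ G.Adj u v) (hwv : ¬ G.Adj w v) (hvt : G.Adj v t)
    (z : Fin n → ℝ) (hz : ∀ i, i ≠ u → i ≠ w → i ≠ v → i ≠ t → z i = 0) :
    Qf G z = 2*(z u * z w) + 2*(z v * z t)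
      + 2*(adjMatR G u t)*(z u * z t) + 2*(adjMatR G w t)*(z w * z t) := by
  have hsym : ∀ a b, adjMatR G a b = adjMatR G b a := by
    intro a b
    by_cases h : G.Adj a b
    · rw [adjMatR_of_adj h, adjMatR_of_adj h.symm]
    · rw [adjMatR_of_not_adj h, adjMatR_of_not_adj (fun hh => h hh.symm)]
  have hsupp : ∀ i ∉ ({u, w, v, t} : Finset (Fin n)), z i = 0 := by
    intro i hi
    simp only [Finset.mem_insert, Finset.mem_singleton] at hi
    push_neg at hi
    exact hz i hi.1 hi.2.1 hi.2.2.1 hi.2.2.2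
  rw [Qf_support G {u, w, v, t} z hsupp]
  have hset : ({u, w, v, t} : Finset (Fin n)) = insert u (insert w (insert v {t})) := rfl
  have hexp : ∀ g : Fin n → ℝ, ∑ i ∈ ({u, w, v, t} : Finset (Fin n)), g i
      = g u + g w + g v + g t := by
    intro g
    rw [hset, Finset.sum_insert (by simp [h1, h2, h3]),
      Finset.sum_insert (by simp [h4, h5]), Finset.sum_pair h6]
    ring
  rw [hexp]
  simp only [hexp]
  rw [adjMatR_of_not_adj (G.irrefl (v := u)), adjMatR_of_not_adj (G.irrefl (v := w)),
    adjMatR_of_not_adj (G.irrefl (v := v)), adjMatR_of_not_adj (G.irrefl (v := t)),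
    adjMatR_of_adj huw, adjMatR_of_adj huw.symm,
    adjMatR_of_not_adj huv, adjMatR_of_not_adj (fun hh => huv hh.symm),
    adjMatR_of_not_adj hwv, adjMatR_of_not_adj (fun hh => hwv hh.symm),
    adjMatR_of_adj hvt, adjMatR_of_adj hvt.symm,
    hsym t u, hsym t w]
  ring

lemma no_bad (G : SimpleGraph (Fin n))
    (hone : ¬ ∃ i j : Fin n, i ≠ j ∧ 0 < (adjMatR_isHermitian G).eigenvalues i ∧
      0 < (adjMatR_isHermitian G).eigenvalues j)
    {u w v t : Fin n}
    (huw : G.Adj u w) (huv : ¬ G.Adj u v) (hwv : ¬ G.Adj w v) (hvt : G.Adj v t) : False := by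
  have h1 : u ≠ w := huw.ne
  have h2 : u ≠ v := fun h => hwv (h ▸ huw.symm)
  have h4 : w ≠ v := fun h => huv (h ▸ huw)
  have h6 : v ≠ t := hvt.ne
  have h3 : u ≠ t := fun h => huv (h ▸ hvt.symm)
  have h5 : w ≠ t := fun h => hwv (h ▸ hvt.symm)
  obtain ⟨φ, hφlin, hφker⟩ := exists_phi G hone
  have hc1 : adjMatR G u t = 0 ∨ adjMatR G u t = 1 := by
    by_cases h : G.Adj u t
    · exact Or.inr (adjMatR_of_adj h)
    · exact Or.inl (adjMatR_of_not_adj h)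
  have hc2 : adjMatR G w t = 0 ∨ adjMatR G w t = 1 := by
    by_cases h : G.Adj w t
    · exact Or.inr (adjMatR_of_adj h)
    · exact Or.inl (adjMatR_of_not_adj h)
  by_cases hboth : G.Adj u t ∧ G.Adj w t
  · -- paw case
    set X : Fin n → ℝ := fun i =>
      (if i = u then 1 else 0) + (if i = w then 1 else 0) + (if i = t then 1 else 0) with hX
    set Y : Fin n → ℝ := fun i =>
      (if i = v then 1 else 0) + (if i = u then -(1/4) else 0)
        + (if i = w then -(1/4) else 0) with hY
    refine keyContra (Qf G) φ X Y (fun a b => hφlin a b X Y) hφker ?_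
    intro a b hab
    set z := a • X + b • Y with hzdef
    have hzap : ∀ i, z i = a * X i + b * Y i := fun i => rfl
    have hzu : z u = a - b/4 := by rw [hzap, hX, hY]; simp [h1, h2, h3, Ne.symm h2]; ring
    have hzw : z w = a - b/4 := by
      rw [hzap, hX, hY]; simp [Ne.symm h1, h4, h5, Ne.symm h4]; ring
    have hzv : z v = b := by rw [hzap, hX, hY]; simp [Ne.symm h2, Ne.symm h4, h6]
    have hzt : z t = a := by rw [hzap, hX, hY]; simp [Ne.symm h3, Ne.symm h5, Ne.symm h6]
    have hz0 : ∀ i, i ≠ u → i ≠ w → i ≠ v → i ≠ t → z i = 0 := by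
      intro i hiu hiw hiv hit
      rw [hzap, hX, hY]; simp [hiu, hiw, hiv, hit]
    rw [Qf_four G h1 h2 h3 h4 h5 h6 huw huv hwv hvt z hz0,
      adjMatR_of_adj hboth.1, adjMatR_of_adj hboth.2, hzu, hzw, hzv, hzt]
    have hab2 : 0 < a^2 + b^2 := by
      rcases not_and_or.mp hab with h | h
      · have : 0 < a^2 := by positivity
        nlinarith [sq_nonneg b]
      · have : 0 < b^2 := by positivity
        nlinarith [sq_nonneg a]
    nlinarith [hab2, sq_nonneg a, sq_nonneg b]
  · -- at most one of ut, wt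
    set X : Fin n → ℝ := fun i =>
      (if i = u then 1 else 0) + (if i = w then 1 else 0) with hX
    set Y : Fin n → ℝ := fun i =>
      (if i = v then 1 else 0) + (if i = t then 1 else 0) with hY
    refine keyContra (Qf G) φ X Y (fun a b => hφlin a b X Y) hφker ?_
    intro a b hab
    set z := a • X + b • Y with hzdef
    have hzap : ∀ i, z i = a * X i + b * Y i := fun i => rfl
    have hzu : z u = a := by rw [hzap, hX, hY]; simp [h1, h2, h3]
    have hzw : z w = a := by rw [hzap, hX, hY]; simp [Ne.symm h1, h4, h5]
    have hzv : z v = b := by rw [hzap, hX, hY]; simp [Ne.symm h2, Ne.symm h4, h6]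
    have hzt : z t = b := by rw [hzap, hX, hY]; simp [Ne.symm h3, Ne.symm h5, Ne.symm h6]
    have hz0 : ∀ i, i ≠ u → i ≠ w → i ≠ v → i ≠ t → z i = 0 := by
      intro i hiu hiw hiv hit
      rw [hzap, hX, hY]; simp [hiu, hiw, hiv, hit]
    rw [Qf_four G h1 h2 h3 h4 h5 h6 huw huv hwv hvt z hz0, hzu, hzw, hzv, hzt]
    have hab2 : 0 < a^2 + b^2 := by
      rcases not_and_or.mp hab with h | h
      · have : 0 < a^2 := by positivity
        nlinarith [sq_nonneg b]
      · have : 0 < b^2 := by positivity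
        nlinarith [sq_nonneg a]
    have hsum1 : adjMatR G u t + adjMatR G w t ≤ 1 := by
      rcases hc1 with h | h <;> rcases hc2 with h' | h' <;> rw [h, h']
      · norm_num
      · norm_num
      · norm_num
      · exfalso
        apply hboth
        constructor
        · by_contra hh; rw [adjMatR_of_not_adj hh] at h; norm_num at h
        · by_contra hh; rw [adjMatR_of_not_adj hh] at h'; norm_num at h'
    have hge0 : 0 ≤ adjMatR G u t ∧ 0 ≤ adjMatR G w t := by
      constructor
      · rcases hc1 with h | h <;> rw [h] <;> norm_num
      · rcases hc2 with h | h <;> rw [h] <;> norm_num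
    set c1 := adjMatR G u t
    set c2 := adjMatR G w t
    nlinarith [hab2, sq_nonneg (a+b), sq_nonneg (a-b),
      mul_nonneg (add_nonneg hge0.1 hge0.2) (sq_nonneg (a+b)),
      mul_nonneg (sub_nonneg.mpr hsum1) (add_nonneg (sq_nonneg a) (sq_nonneg b))]

end Aux5


theorem secondEig_eq_zero_iff (n : ℕ) (hn : 2 ≤ n) (G : SimpleGraph (Fin n))
    (h : ∀ v, ∃ w, G.Adj v w) :
    eigval G 1 = 0 ↔
      ∃ k : ℕ, 2 ≤ k ∧ k ≤ n - 1 ∧ ∃ f : Fin n → Fin k, Function.Surjective f ∧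
        ∀ u v, G.Adj u v ↔ f u ≠ f v := by
  have hup_lt : ∀ a b : ℝ, a ≤ b → 0 < a → 0 < b := fun a b hab ha => lt_of_lt_of_le ha hab
  have hup_le : ∀ a b : ℝ, a ≤ b → 0 ≤ a → 0 ≤ b := fun a b hab ha => le_trans ha hab
  constructor
  · -- forward direction
    intro h0
    have hone : ¬ ∃ i j : Fin n, i ≠ j ∧ 0 < (adjMatR_isHermitian G).eigenvalues i ∧
        0 < (adjMatR_isHermitian G).eigenvalues j := by
      intro hex
      have := (eigval1_iff G hn (fun x => 0 < x) hup_lt).mpr hex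
      rw [h0] at this
      exact lt_irrefl 0 this
    -- non-adjacency is an equivalence relation
    have htrans : ∀ {a b c : Fin n}, ¬G.Adj a b → ¬G.Adj b c → ¬G.Adj a c := by
      intro a b c hab hbc hac
      obtain ⟨t, hbt⟩ := h b
      exact no_bad G hone hac hab (fun h' => hbc h'.symm) hbt
    set s : Setoid (Fin n) := ⟨fun a b => ¬ G.Adj a b,
      ⟨fun a => G.irrefl, fun {a b} hab h' => hab h'.symm, fun {a b c} => htrans⟩⟩ with hs
    letI : DecidableRel s.r := fun a b => Classical.dec _
    letI : DecidableRel ((· ≈ ·) : Fin n → Fin n → Prop) := fun a b => Classical.dec _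
    set k := Fintype.card (Quotient s) with hk
    set e := Fintype.equivFin (Quotient s) with he
    set f : Fin n → Fin k := fun x => e (Quotient.mk s x) with hf
    have hAdjIff : ∀ u v, G.Adj u v ↔ f u ≠ f v := by
      intro u v
      constructor
      · intro hadj heq
        have hq : Quotient.mk s u = Quotient.mk s v := e.injective heq
        exact (Quotient.exact hq : ¬ G.Adj u v) hadj
      · intro hne
        by_contra hnadj
        exact hne (congrArg e (Quotient.sound (hnadj : ¬ G.Adj u v)))
    have hsurj : Function.Surjective f :=
      e.surjective.comp (Quotient.mk''_surjective)
    have hk2 : 2 ≤ k := by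
      obtain ⟨w0, hw0⟩ := h ⟨0, by omega⟩
      have hne : f ⟨0, by omega⟩ ≠ f w0 := (hAdjIff _ _).mp hw0
      have : 1 < Fintype.card (Fin k) := Fintype.one_lt_card_iff_nontrivial.mpr
        ⟨⟨f ⟨0, by omega⟩, f w0, hne⟩⟩
      simp at this; omega
    have hk1 : k ≤ n - 1 := by
      -- find a non-adjacent pair
      have hpair : ∃ u v : Fin n, u ≠ v ∧ ¬ G.Adj u v := by
        by_contra hcomp
        push_neg at hcomp
        obtain ⟨i, hizero⟩ := exists_eig_zero_of_eigval G hn h0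
        obtain ⟨y, hy, hker⟩ := eigenvector_of_eig_zero G hizero
        have hrow : ∀ j, y j = ∑ m, y m := by
          intro j
          have hj := congrFun hker j
          have hexp : (adjMatR G *ᵥ y) j = ∑ m, adjMatR G j m * y m := rfl
          have hterm : ∀ m, adjMatR G j m * y m = y m - (if m = j then y m else 0) := by
            intro m
            by_cases hm : m = j
            · subst hm
              rw [adjMatR_of_not_adj (G.irrefl (v := m)), if_pos rfl]
              ring
            · rw [adjMatR_of_adj (hcomp j m (Ne.symm hm)), if_neg hm]
              ring
          rw [hexp] at hj
          rw [Finset.sum_congr rfl (fun m _ => hterm m), Finset.sum_sub_distrib] at hj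
          simp only [Finset.sum_ite_eq' Finset.univ j y, Finset.mem_univ, if_pos,
            Pi.zero_apply] at hj
          linarith
        set S := ∑ m, y m with hS
        have hnS : S = (n : ℝ) * S := by
          calc S = ∑ m : Fin n, y m := rfl
            _ = ∑ _m : Fin n, S := Finset.sum_congr rfl (fun m _ => hrow m)
            _ = (n : ℝ) * S := by rw [Finset.sum_const, Finset.card_univ]; simp [mul_comm]
        have hS0 : S = 0 := by
          have hn' : (2:ℝ) ≤ (n:ℝ) := by exact_mod_cast hn
          nlinarith
        apply hy
        funext j
        rw [hrow j, hS0]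
        simp
      obtain ⟨u, v, huvne, hnadj⟩ := hpair
      have hninj : ¬ Function.Injective f := by
        intro hinj
        exact huvne (hinj (congrArg e (Quotient.sound (hnadj : ¬ G.Adj u v))))
      have := Fintype.card_lt_of_surjective_not_injective f hsurj hninj
      simp only [Fintype.card_fin] at this
      omega
    exact ⟨k, hk2, hk1, f, hsurj, hAdjIff⟩
  · -- backward direction
    rintro ⟨k, hk2, hk1, f, hsurj, hGf⟩
    -- a repeated part
    have hninj : ¬ Function.Injective f := by
      intro hinj
      have := Fintype.card_le_of_injective f hinj
      simp only [Fintype.card_fin] at this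
      omega
    obtain ⟨u, v, hfuv, huvne⟩ := Function.not_injective_iff.mp hninj
    have hnadj : ¬ G.Adj u v := by rw [hGf]; simpa using hfuv
    -- kernel vector
    set y : Fin n → ℝ := fun i => (if i = u then 1 else 0) - (if i = v then 1 else 0) with hy
    have hyne : y ≠ 0 := by
      intro h0
      have := congrFun h0 u
      rw [hy] at this
      simp [huvne] at this
    have hkery : adjMatR G *ᵥ y = 0 := by
      funext j
      have hexp : (adjMatR G *ᵥ y) j = ∑ m, adjMatR G j m * y m := rfl
      rw [hexp, hy]
      simp only [mul_sub, mul_ite, mul_one, mul_zero, Finset.sum_sub_distrib,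
        Finset.sum_ite_eq' Finset.univ, Finset.mem_univ, if_pos]
      have : adjMatR G j u = adjMatR G j v := by
        by_cases hj : f j = f u
        · rw [adjMatR_of_not_adj (by rw [hGf]; simpa using hj),
            adjMatR_of_not_adj (by rw [hGf]; simp [hfuv ▸ hj])]
        · rw [adjMatR_of_adj (by rw [hGf]; exact hj),
            adjMatR_of_adj (by rw [hGf]; rw [← hfuv]; exact hj)]
      rw [this]
      simp
    obtain ⟨i0, hi0⟩ := eig_zero_of_kernel G hyne hkery
    -- there is an edge
    obtain ⟨a, ha⟩ := hsurj ⟨0, by omega⟩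
    obtain ⟨b, hb⟩ := hsurj ⟨1, by omega⟩
    have hadj_ab : G.Adj a b := by
      rw [hGf, ha, hb]
      intro hh
      have := Fin.mk.injEq (0:ℕ) (by omega : (0:ℕ) < k) 1 (by omega : (1:ℕ) < k) ▸ hh
      simp [Fin.ext_iff] at hh
    -- second nonneg eigenvalue
    have hsecond : ∃ j ≠ i0, 0 ≤ (adjMatR_isHermitian G).eigenvalues j := by
      by_contra hall
      push_neg at hall
      have hallle : ∀ j, (adjMatR_isHermitian G).eigenvalues j ≤ 0 := by
        intro j
        by_cases hj : j = i0
        · rw [hj, hi0]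
        · exact le_of_lt (hall j hj)
      have hQle : ∀ z : Fin n → ℝ, Qf G z ≤ 0 := by
        intro z
        have hzz := Qf_spec G ((WithLp.equiv 2 (Fin n → ℝ)).symm z)
        simp only [Equiv.apply_symm_apply] at hzz
        rw [hzz]
        apply Finset.sum_nonpos
        intro i _
        nlinarith [hallle i, sq_nonneg (inner ℝ ((adjMatR_isHermitian G).eigenvectorBasis i)
          ((WithLp.equiv 2 (Fin n → ℝ)).symm z) : ℝ)]
      have := hQle (fun i => (if i = a then 1 else 0) + (if i = b then 1 else 0))
      rw [Qf_edge G hadj_ab] at this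
      linarith
    obtain ⟨j0, hj0ne, hj0⟩ := hsecond
    have hge : 0 ≤ eigval G 1 := by
      rw [eigval1_iff G hn (fun x => 0 ≤ x) hup_le]
      exact ⟨i0, j0, Ne.symm hj0ne, le_of_eq hi0.symm, hj0⟩
    have hle : eigval G 1 ≤ 0 := by
      by_contra hgt
      push_neg at hgt
      obtain ⟨i, j, hij, hi, hj⟩ := (eigval1_iff G hn (fun x => 0 < x) hup_lt).mp hgt
      obtain ⟨X, Y, hpos⟩ := two_pos_vectors G hij hi hj
      exact keyContra (Qf G) (fun z => ∑ m, z m) X Y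
        (by
          intro a' b'
          simp [Finset.sum_add_distrib, Finset.mul_sum])
        (fun z hz => Qf_multipartite G f hGf z hz)
        hpos
    linarith
end
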